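/- arXiv:1712.06733 — 5 statements merged into one kernel-verified Lean document; each statement's English description precedes it below -/
import Mathlib

section
/- Let ε > 0 and define u : ℝ³ → ℝ by u(x,y,t) = (t² + (ε² + x² + y²)²)^(−1/2). Let X and Y be the left-invariant Heisenberg vector fields X = ∂/∂x + 2y ∂/∂t and Y = ∂/∂y − 2x ∂/∂t. Then (X² + Y²)u = −4ε² u³ everywhere on ℝ³. -/
open Real

/-- The left-invariant Heisenberg vector field `X = ∂/∂x + 2y ∂/∂t`,
acting on functions of `(x, y, t) ∈ ℝ³`. -/
noncomputable def heisenbergX (f : ℝ × ℝ × ℝ → ℝ) : ℝ × ℝ × ℝ → ℝ :=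
  fun p => fderiv ℝ f p (1, 0, 0) + 2 * p.2.1 * fderiv ℝ f p (0, 0, 1)

/-- The left-invariant Heisenberg vector field `Y = ∂/∂y − 2x ∂/∂t`. -/
noncomputable def heisenbergY (f : ℝ × ℝ × ℝ → ℝ) : ℝ × ℝ × ℝ → ℝ :=
  fun p => fderiv ℝ f p (0, 1, 0) - 2 * p.1 * fderiv ℝ f p (0, 0, 1)

noncomputable def dX : (ℝ × ℝ × ℝ) →L[ℝ] ℝ := ContinuousLinearMap.fst ℝ ℝ (ℝ × ℝ)
noncomputable def dY : (ℝ × ℝ × ℝ) →L[ℝ] ℝ :=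
  (ContinuousLinearMap.fst ℝ ℝ ℝ).comp (ContinuousLinearMap.snd ℝ ℝ (ℝ × ℝ))
noncomputable def dT : (ℝ × ℝ × ℝ) →L[ℝ] ℝ :=
  (ContinuousLinearMap.snd ℝ ℝ ℝ).comp (ContinuousLinearMap.snd ℝ ℝ (ℝ × ℝ))

@[simp] lemma dX_apply (v : ℝ × ℝ × ℝ) : dX v = v.1 := rfl
@[simp] lemma dY_apply (v : ℝ × ℝ × ℝ) : dY v = v.2.1 := rfl
@[simp] lemma dT_apply (v : ℝ × ℝ × ℝ) : dT v = v.2.2 := rfl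

noncomputable def Qf (ε : ℝ) (q : ℝ × ℝ × ℝ) : ℝ := ε ^ 2 + q.1 * q.1 + q.2.1 * q.2.1
noncomputable def Wf (ε : ℝ) (q : ℝ × ℝ × ℝ) : ℝ := q.2.2 * q.2.2 + Qf ε q * Qf ε q
noncomputable def Af (ε : ℝ) (q : ℝ × ℝ × ℝ) : ℝ := Qf ε q * q.1 + q.2.1 * q.2.2
noncomputable def Bf (ε : ℝ) (q : ℝ × ℝ × ℝ) : ℝ := Qf ε q * q.2.1 - q.1 * q.2.2

noncomputable def LW (ε : ℝ) (q : ℝ × ℝ × ℝ) : (ℝ × ℝ × ℝ) →L[ℝ] ℝ :=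
  (q.2.2 • dT + q.2.2 • dT) +
    (Qf ε q • ((0 : (ℝ × ℝ × ℝ) →L[ℝ] ℝ) + (q.1 • dX + q.1 • dX) + (q.2.1 • dY + q.2.1 • dY)) +
     Qf ε q • ((0 : (ℝ × ℝ × ℝ) →L[ℝ] ℝ) + (q.1 • dX + q.1 • dX) + (q.2.1 • dY + q.2.1 • dY)))

noncomputable def LA (ε : ℝ) (q : ℝ × ℝ × ℝ) : (ℝ × ℝ × ℝ) →L[ℝ] ℝ :=
  (Qf ε q + 2 * q.1 * q.1) • dX + ((2 * q.1 * q.2.1 + q.2.2) • dY + q.2.1 • dT)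

noncomputable def LB (ε : ℝ) (q : ℝ × ℝ × ℝ) : (ℝ × ℝ × ℝ) →L[ℝ] ℝ :=
  (2 * q.1 * q.2.1 - q.2.2) • dX + ((Qf ε q + 2 * q.2.1 * q.2.1) • dY + (-q.1) • dT)

lemma Qf_pos {ε : ℝ} (hε : 0 < ε) (q : ℝ × ℝ × ℝ) : 0 < Qf ε q := by
  have := pow_pos hε 2
  unfold Qf
  nlinarith [mul_self_nonneg q.1, mul_self_nonneg q.2.1]

lemma Wf_pos {ε : ℝ} (hε : 0 < ε) (q : ℝ × ℝ × ℝ) : 0 < Wf ε q := by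
  have hQ := Qf_pos hε q
  unfold Wf
  nlinarith [mul_self_nonneg q.2.2, mul_pos hQ hQ]

lemma hasFDerivAt_x (q : ℝ × ℝ × ℝ) : HasFDerivAt (fun p : ℝ × ℝ × ℝ => p.1) dX q :=
  hasFDerivAt_fst

lemma hasFDerivAt_y (q : ℝ × ℝ × ℝ) : HasFDerivAt (fun p : ℝ × ℝ × ℝ => p.2.1) dY q :=
  hasFDerivAt_fst.comp q hasFDerivAt_snd

lemma hasFDerivAt_t (q : ℝ × ℝ × ℝ) : HasFDerivAt (fun p : ℝ × ℝ × ℝ => p.2.2) dT q :=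
  hasFDerivAt_snd.comp q hasFDerivAt_snd

lemma hasFDerivAt_Qf (ε : ℝ) (q : ℝ × ℝ × ℝ) :
    HasFDerivAt (Qf ε)
      ((0 : (ℝ × ℝ × ℝ) →L[ℝ] ℝ) + (q.1 • dX + q.1 • dX) + (q.2.1 • dY + q.2.1 • dY)) q :=
  ((hasFDerivAt_const (ε ^ 2) q).add ((hasFDerivAt_x q).mul (hasFDerivAt_x q))).add
    ((hasFDerivAt_y q).mul (hasFDerivAt_y q))

lemma hasFDerivAt_Wf (ε : ℝ) (q : ℝ × ℝ × ℝ) :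
    HasFDerivAt (Wf ε) (LW ε q) q :=
  ((hasFDerivAt_t q).mul (hasFDerivAt_t q)).add
    ((hasFDerivAt_Qf ε q).mul (hasFDerivAt_Qf ε q))

lemma hasFDerivAt_Af (ε : ℝ) (q : ℝ × ℝ × ℝ) :
    HasFDerivAt (Af ε) (LA ε q) q := by
  have h := ((hasFDerivAt_Qf ε q).mul (hasFDerivAt_x q)).add
    ((hasFDerivAt_y q).mul (hasFDerivAt_t q))
  refine h.congr_fderiv ?_
  refine ContinuousLinearMap.ext fun v => ?_
  simp [LA, Qf]
  ring

lemma hasFDerivAt_Bf (ε : ℝ) (q : ℝ × ℝ × ℝ) :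
    HasFDerivAt (Bf ε) (LB ε q) q := by
  have h := ((hasFDerivAt_Qf ε q).mul (hasFDerivAt_y q)).sub
    ((hasFDerivAt_x q).mul (hasFDerivAt_t q))
  refine h.congr_fderiv ?_
  refine ContinuousLinearMap.ext fun v => ?_
  simp [LB, Qf]
  ring

lemma hasFDerivAt_u {ε : ℝ} (hε : 0 < ε) (q : ℝ × ℝ × ℝ) :
    HasFDerivAt (fun q => Wf ε q ^ (-(1 : ℝ) / 2))
      ((-(1 : ℝ) / 2 * Wf ε q ^ (-(1 : ℝ) / 2 - 1)) • LW ε q) q :=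
  (hasFDerivAt_Wf ε q).rpow_const (Or.inl (Wf_pos hε q).ne')

lemma hasFDerivAt_XU {ε : ℝ} (hε : 0 < ε) (p : ℝ × ℝ × ℝ) :
    HasFDerivAt (fun q => -2 * Af ε q * Wf ε q ^ (-(3 : ℝ) / 2))
      ((-2 * Af ε p) • ((-(3 : ℝ) / 2 * Wf ε p ^ (-(3 : ℝ) / 2 - 1)) • LW ε p) +
        (Wf ε p ^ (-(3 : ℝ) / 2)) •
          ((-2 : ℝ) • LA ε p + Af ε p • (0 : (ℝ × ℝ × ℝ) →L[ℝ] ℝ))) p :=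
  ((hasFDerivAt_const (-2 : ℝ) p).mul (hasFDerivAt_Af ε p)).mul
    ((hasFDerivAt_Wf ε p).rpow_const (p := -(3 : ℝ) / 2) (Or.inl (Wf_pos hε p).ne'))

lemma hasFDerivAt_YU {ε : ℝ} (hε : 0 < ε) (p : ℝ × ℝ × ℝ) :
    HasFDerivAt (fun q => -2 * Bf ε q * Wf ε q ^ (-(3 : ℝ) / 2))
      ((-2 * Bf ε p) • ((-(3 : ℝ) / 2 * Wf ε p ^ (-(3 : ℝ) / 2 - 1)) • LW ε p) +
        (Wf ε p ^ (-(3 : ℝ) / 2)) •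
          ((-2 : ℝ) • LB ε p + Bf ε p • (0 : (ℝ × ℝ × ℝ) →L[ℝ] ℝ))) p :=
  ((hasFDerivAt_const (-2 : ℝ) p).mul (hasFDerivAt_Bf ε p)).mul
    ((hasFDerivAt_Wf ε p).rpow_const (p := -(3 : ℝ) / 2) (Or.inl (Wf_pos hε p).ne'))

lemma Xu_eq {ε : ℝ} (hε : 0 < ε) :
    heisenbergX (fun q => Wf ε q ^ (-(1 : ℝ) / 2)) =
      fun q => -2 * Af ε q * Wf ε q ^ (-(3 : ℝ) / 2) := by
  funext q
  simp only [heisenbergX]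
  rw [(hasFDerivAt_u hε q).fderiv]
  rw [show (-(1 : ℝ) / 2 - 1) = -(3 : ℝ) / 2 by norm_num]
  simp [LW, Af]
  ring

lemma Yu_eq {ε : ℝ} (hε : 0 < ε) :
    heisenbergY (fun q => Wf ε q ^ (-(1 : ℝ) / 2)) =
      fun q => -2 * Bf ε q * Wf ε q ^ (-(3 : ℝ) / 2) := by
  funext q
  simp only [heisenbergY]
  rw [(hasFDerivAt_u hε q).fderiv]
  rw [show (-(1 : ℝ) / 2 - 1) = -(3 : ℝ) / 2 by norm_num]
  simp [LW, Bf]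
  ring

set_option maxHeartbeats 1000000 in
/-- The standard bubble `u(x,y,t) = (t² + (ε² + x² + y²)²)^(−1/2)` satisfies
`(X² + Y²) u = −4 ε² u³` on all of `ℝ³`. -/
theorem bubble_solves_CR_Yamabe (ε : ℝ) (hε : 0 < ε)
    (u : ℝ × ℝ × ℝ → ℝ)
    (hu : u = fun p => (p.2.2 ^ 2 + (ε ^ 2 + p.1 ^ 2 + p.2.1 ^ 2) ^ 2) ^ (-(1 : ℝ) / 2)) :
    ∀ p : ℝ × ℝ × ℝ,
      heisenbergX (heisenbergX u) p + heisenbergY (heisenbergY u) p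
        = -(4 * ε ^ 2) * u p ^ 3 := by
  have hu' : u = fun q => Wf ε q ^ (-(1 : ℝ) / 2) := by
    rw [hu]; funext q; congr 1; simp [Wf, Qf]; ring
  intro p
  rw [hu', Xu_eq hε, Yu_eq hε]
  simp only [heisenbergX, heisenbergY]
  rw [(hasFDerivAt_XU hε p).fderiv, (hasFDerivAt_YU hε p).fderiv]
  rw [show (-(3 : ℝ) / 2 - 1) = -(5 : ℝ) / 2 by norm_num]
  have hW0 := Wf_pos hε p
  have hab : Wf ε p * Wf ε p ^ (-(5 : ℝ) / 2) = Wf ε p ^ (-(3 : ℝ) / 2) := by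
    rw [show (-(3 : ℝ) / 2) = 1 + (-(5 : ℝ) / 2) by norm_num, Real.rpow_add hW0,
      Real.rpow_one]
  have hcube : (Wf ε p ^ (-(1 : ℝ) / 2)) ^ 3 = Wf ε p ^ (-(3 : ℝ) / 2) := by
    rw [← Real.rpow_natCast (Wf ε p ^ (-(1 : ℝ) / 2)) 3, ← Real.rpow_mul hW0.le]
    norm_num
  rw [hcube]
  simp only [ContinuousLinearMap.add_apply, ContinuousLinearMap.smul_apply,
    ContinuousLinearMap.zero_apply, dX_apply, dY_apply, dT_apply, smul_eq_mul, LW, LA, LB]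
  set a := Wf ε p ^ (-(3 : ℝ) / 2) with ha
  set b := Wf ε p ^ (-(5 : ℝ) / 2) with hb
  simp only [Af, Bf, Qf, Wf] at hab ⊢
  linear_combination (12 * (p.1 * p.1 + p.2.1 * p.2.1)) * hab
end

section
/- Let q be a real number with 2 < q ≤ 4. There exists a constant C = C(q) > 0 such that for all real numbers v ≥ 0 and w with v + w ≥ 0, one has |(v+w)^q − v^q − q v^{q−1} w − (q(q−1)/2) v^{q−2} w²| ≤ C ( v^{max(0, q−3)} |w|^{min(3, q)} + |w|^q ). -/
open Set
open scoped NNReal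

lemma sotp_hasDeriv (v w p t : ℝ) (h : v + t * w ≠ 0 ∨ 1 ≤ p) :
    HasDerivAt (fun t => (v + t * w) ^ p) (p * (v + t * w) ^ (p - 1) * w) t := by
  have h1 : HasDerivAt (fun t : ℝ => v + t * w) w t := by
    simpa using ((hasDerivAt_id t).mul_const w).const_add v
  exact (Real.hasDerivAt_rpow_const h).comp t h1

lemma sotp_subadd (a b p : ℝ) (ha : 0 ≤ a) (hb : 0 ≤ b) (hp : 0 ≤ p) (hp1 : p ≤ 1) :
    (a + b) ^ p ≤ a ^ p + b ^ p := by
  have h := NNReal.rpow_add_le_add_rpow a.toNNReal b.toNNReal hp hp1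
  have h2 : ((a.toNNReal + b.toNNReal : ℝ≥0) : ℝ) = a + b := by
    simp [Real.coe_toNNReal _ ha, Real.coe_toNNReal _ hb]
  calc (a + b) ^ p = ((a.toNNReal + b.toNNReal : ℝ≥0) : ℝ) ^ p := by rw [h2]
    _ = (((a.toNNReal + b.toNNReal) ^ p : ℝ≥0) : ℝ) := by
        rw [← NNReal.coe_rpow]
    _ ≤ ((a.toNNReal ^ p + b.toNNReal ^ p : ℝ≥0) : ℝ) := by exact_mod_cast h
    _ = a ^ p + b ^ p := by
        rw [NNReal.coe_add, NNReal.coe_rpow, NNReal.coe_rpow,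
          Real.coe_toNNReal _ ha, Real.coe_toNNReal _ hb]

lemma sotp_abs_sub (a b p : ℝ) (ha : 0 ≤ a) (hb : 0 ≤ b) (hp : 0 < p) (hp1 : p ≤ 1) :
    |a ^ p - b ^ p| ≤ |a - b| ^ p := by
  wlog hab : b ≤ a generalizing a b
  · rw [abs_sub_comm, abs_sub_comm a b]; exact this b a hb ha (le_of_not_ge hab)
  have h1 : b ^ p ≤ a ^ p := Real.rpow_le_rpow hb hab hp.le
  rw [abs_of_nonneg (by linarith), abs_of_nonneg (by linarith)]
  have := sotp_subadd (a - b) b p (by linarith) hb hp.le hp1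
  rw [sub_add_cancel] at this
  linarith

lemma sotp_key (q v w : ℝ) (hq : 2 ≤ q) :
    ∃ s ∈ Set.Ioo (0:ℝ) 1,
      |(v + w) ^ q - v ^ q - q * v ^ (q - 1) * w - (q * (q - 1) / 2) * v ^ (q - 2) * w ^ 2|
        ≤ q * (q - 1) * w ^ 2 * |(v + s * w) ^ (q - 2) - v ^ (q - 2)| := by
  set F : ℝ → ℝ := fun t => (v + t * w) ^ q - q * v ^ (q - 1) * w * t
      - q * (q - 1) / 2 * v ^ (q - 2) * w ^ 2 * t ^ 2 with hFdef
  set F' : ℝ → ℝ := fun t => q * (v + t * w) ^ (q - 1) * w - q * v ^ (q - 1) * w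
      - q * (q - 1) * v ^ (q - 2) * w ^ 2 * t with hF'def
  have hF : ∀ t, HasDerivAt F (F' t) t := by
    intro t
    have h1 := sotp_hasDeriv v w q t (Or.inr (by linarith))
    have h2 : HasDerivAt (fun t : ℝ => q * v ^ (q - 1) * w * t) (q * v ^ (q - 1) * w) t := by
      simpa using (hasDerivAt_id t).const_mul (q * v ^ (q - 1) * w)
    have h3 : HasDerivAt (fun t : ℝ => q * (q - 1) / 2 * v ^ (q - 2) * w ^ 2 * t ^ 2)
        (q * (q - 1) / 2 * v ^ (q - 2) * w ^ 2 * (2 * t)) t := by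
      have := (hasDerivAt_pow 2 t).const_mul (q * (q - 1) / 2 * v ^ (q - 2) * w ^ 2)
      simpa using this
    have := (h1.sub h2).sub h3
    refine HasDerivAt.congr_deriv this ?_
    rw [hF'def]; beta_reduce; ring
  obtain ⟨θ, hθ, hθeq⟩ := exists_hasDerivAt_eq_slope F F' one_pos
    (fun x _ => (hF x).continuousAt.continuousWithinAt) (fun x _ => hF x)
  set G : ℝ → ℝ := fun t => (v + t * w) ^ (q - 1) - (q - 1) * v ^ (q - 2) * w * t with hGdef
  set G' : ℝ → ℝ := fun t => (q - 1) * (v + t * w) ^ (q - 2) * w - (q - 1) * v ^ (q - 2) * w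
    with hG'def
  have hG : ∀ t, HasDerivAt G (G' t) t := by
    intro t
    have h1 := sotp_hasDeriv v w (q - 1) t (Or.inr (by linarith))
    have h2 : HasDerivAt (fun t : ℝ => (q - 1) * v ^ (q - 2) * w * t)
        ((q - 1) * v ^ (q - 2) * w) t := by
      simpa using (hasDerivAt_id t).const_mul ((q - 1) * v ^ (q - 2) * w)
    have he : q - 1 - 1 = q - 2 := by ring
    rw [he] at h1
    exact h1.sub h2
  obtain ⟨s, hs, hseq⟩ := exists_hasDerivAt_eq_slope G G' hθ.1
    (fun x _ => (hG x).continuousAt.continuousWithinAt) (fun x _ => hG x)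
  refine ⟨s, ⟨hs.1, hs.2.trans hθ.2⟩, ?_⟩
  have hexpr : (v + w) ^ q - v ^ q - q * v ^ (q - 1) * w
      - (q * (q - 1) / 2) * v ^ (q - 2) * w ^ 2 = F 1 - F 0 := by
    simp [hFdef]; ring
  have hF10 : F 1 - F 0 = F' θ := by
    rw [hθeq]; field_simp; ring
  have hθne : θ ≠ 0 := ne_of_gt hθ.1
  have hGθ : G θ - G 0 = θ * G' s := by
    rw [hseq, sub_zero, mul_comm, div_mul_cancel₀ _ hθne]
  have hFG : F' θ = q * w * (G θ - G 0) := by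
    simp [hF'def, hGdef]; ring
  have hfinal : (v + w) ^ q - v ^ q - q * v ^ (q - 1) * w
      - (q * (q - 1) / 2) * v ^ (q - 2) * w ^ 2
      = q * (q - 1) * θ * w ^ 2 * ((v + s * w) ^ (q - 2) - v ^ (q - 2)) := by
    rw [hexpr, hF10, hFG, hGθ]
    simp [hG'def]; ring
  have hcoef : (0:ℝ) ≤ q * (q - 1) * θ * w ^ 2 :=
    mul_nonneg (mul_nonneg (mul_nonneg (by linarith) (by linarith)) hθ.1.le) (sq_nonneg w)
  rw [hfinal, abs_mul, abs_of_nonneg hcoef]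
  have hθ1 : θ ≤ 1 := hθ.2.le
  have habs : (0:ℝ) ≤ |(v + s * w) ^ (q - 2) - v ^ (q - 2)| := abs_nonneg _
  have hbase : (0:ℝ) ≤ q * (q - 1) * w ^ 2 * |(v + s * w) ^ (q - 2) - v ^ (q - 2)| :=
    mul_nonneg (mul_nonneg (mul_nonneg (by linarith) (by linarith)) (sq_nonneg w)) habs
  calc q * (q - 1) * θ * w ^ 2 * |(v + s * w) ^ (q - 2) - v ^ (q - 2)|
      = θ * (q * (q - 1) * w ^ 2 * |(v + s * w) ^ (q - 2) - v ^ (q - 2)|) := by ring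
    _ ≤ 1 * (q * (q - 1) * w ^ 2 * |(v + s * w) ^ (q - 2) - v ^ (q - 2)|) :=
        mul_le_mul_of_nonneg_right hθ1 hbase
    _ = _ := one_mul _

lemma sotp_abs_sub4 (a b c d : ℝ) : |a - b - c - d| ≤ |a| + |b| + |c| + |d| := by
  calc |a - b - c - d| ≤ |a - b - c| + |d| := abs_sub _ _
    _ ≤ |a - b| + |c| + |d| := by linarith [abs_sub (a - b) c]
    _ ≤ |a| + |b| + |c| + |d| := by linarith [abs_sub a b]


set_option maxHeartbeats 1600000 in
/-- Second-order Taylor remainder estimate for the power function: for `2 < q ≤ 4`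
there is `C > 0` with
`|(v+w)^q − v^q − q v^{q−1} w − (q(q−1)/2) v^{q−2} w²|
  ≤ C (v^{max(0,q−3)} |w|^{min(3,q)} + |w|^q)`
for all `v ≥ 0` and `w` with `v + w ≥ 0`. -/
theorem second_order_taylor_power (q : ℝ) (hq1 : 2 < q) (hq2 : q ≤ 4) :
    ∃ C : ℝ, 0 < C ∧ ∀ v w : ℝ, 0 ≤ v → 0 ≤ v + w →
      |(v + w) ^ q - v ^ q - q * v ^ (q - 1) * w - (q * (q - 1) / 2) * v ^ (q - 2) * w ^ 2|
        ≤ C * (v ^ max 0 (q - 3) * |w| ^ min 3 q + |w| ^ q) := by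
  refine ⟨200, by norm_num, ?_⟩
  intro v w hv hvw
  rcases eq_or_ne w 0 with rfl | hw
  · have hq0 : q ≠ 0 := by positivity
    have hm0 : min 3 q ≠ 0 := ne_of_gt (lt_min (by norm_num) (by linarith))
    simp [Real.zero_rpow hq0, Real.zero_rpow hm0]
  · obtain ⟨s, hs, hkey⟩ := sotp_key q v w hq1.le
    have hwpos : 0 < |w| := abs_pos.2 hw
    have hsw : 0 ≤ v + s * w := by
      rcases le_or_gt 0 w with h | h
      · nlinarith [hs.1.le]
      · nlinarith [hs.2.le, hs.1.le]
    have hswle : |s * w| ≤ |w| := by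
      rw [abs_mul, abs_of_pos hs.1]
      nlinarith [abs_nonneg w, hs.2.le]
    have hcoef : (0:ℝ) ≤ q * (q - 1) * w ^ 2 :=
      mul_nonneg (mul_nonneg (by linarith) (by linarith)) (sq_nonneg w)
    by_cases hq3 : q ≤ 3
    · have hmin : min 3 q = q := min_eq_right hq3
      have hmax : max 0 (q - 3) = 0 := max_eq_left (by linarith)
      rw [hmin, hmax, Real.rpow_zero, one_mul]
      have hd := sotp_abs_sub (v + s * w) v (q - 2) hsw hv (by linarith) (by linarith)
      have hd2 : |v + s * w - v| ^ (q - 2) ≤ |w| ^ (q - 2) := by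
        rw [add_sub_cancel_left]
        exact Real.rpow_le_rpow (abs_nonneg _) hswle (by linarith)
      have h1 := hkey.trans (mul_le_mul_of_nonneg_left (hd.trans hd2) hcoef)
      have h2 : w ^ 2 * |w| ^ (q - 2) = |w| ^ q := by
        rw [← sq_abs, ← Real.rpow_natCast |w| 2, ← Real.rpow_add hwpos]
        norm_num
      have hP : (0:ℝ) ≤ |w| ^ q := Real.rpow_nonneg (abs_nonneg w) q
      calc |(v + w) ^ q - v ^ q - q * v ^ (q - 1) * w
            - (q * (q - 1) / 2) * v ^ (q - 2) * w ^ 2|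
          ≤ q * (q - 1) * w ^ 2 * |w| ^ (q - 2) := h1
        _ = q * (q - 1) * (w ^ 2 * |w| ^ (q - 2)) := by ring
        _ = q * (q - 1) * |w| ^ q := by rw [h2]
        _ ≤ 200 * (|w| ^ q + |w| ^ q) := by
            have hqq : q * (q - 1) ≤ 400 := by nlinarith
            have := mul_le_mul_of_nonneg_right hqq hP
            linarith
    · push_neg at hq3
      have hmin : min 3 q = 3 := min_eq_left hq3.le
      have hmax : max 0 (q - 3) = q - 3 := max_eq_right (by linarith)
      rw [hmin, hmax]
      have h3w : |w| ^ (3:ℝ) = |w| ^ (3:ℕ) := by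
        rw [← Real.rpow_natCast |w| 3]; norm_num
      have hnn3 : (0:ℝ) ≤ v ^ (q - 3) * |w| ^ (3:ℝ) :=
        mul_nonneg (Real.rpow_nonneg hv _) (Real.rpow_nonneg (abs_nonneg w) _)
      have hPq : (0:ℝ) ≤ |w| ^ q := Real.rpow_nonneg (abs_nonneg w) q
      by_cases hvw2 : 2 * |w| ≤ v
      · -- third MVT
        have hbase : ∀ t : ℝ, 0 ≤ t → t ≤ 1 → 0 < v + t * w := by
          intro t ht0 ht1
          nlinarith [neg_abs_le w, abs_nonneg w]
        have hH : ∀ t ∈ Icc (0:ℝ) s, HasDerivAt (fun t => (v + t * w) ^ (q - 2))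
            ((q - 2) * (v + t * w) ^ (q - 2 - 1) * w) t := by
          intro t ht
          exact sotp_hasDeriv v w (q - 2) t
            (Or.inl (ne_of_gt (hbase t ht.1 (ht.2.trans hs.2.le))))
        obtain ⟨u, hu, hueq⟩ := exists_hasDerivAt_eq_slope
          (fun t => (v + t * w) ^ (q - 2)) (fun t => (q - 2) * (v + t * w) ^ (q - 2 - 1) * w)
          hs.1 (fun x hx => (hH x hx).continuousAt.continuousWithinAt)
          (fun x hx => hH x (Ioo_subset_Icc_self hx))
        have hu1 : 0 < u := hu.1
        have hu2 : u < 1 := hu.2.trans hs.2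
        have hdiff : (v + s * w) ^ (q - 2) - v ^ (q - 2)
            = s * ((q - 2) * (v + u * w) ^ (q - 2 - 1) * w) := by
          have hsne : s ≠ 0 := ne_of_gt hs.1
          have := hueq
          rw [sub_zero] at this
          simp only [zero_mul, add_zero] at this
          rw [eq_div_iff hsne] at this
          rw [← this]; ring
        have he : q - 2 - 1 = q - 3 := by ring
        rw [he] at hdiff
        have hub : (v + u * w) ^ (q - 3) ≤ 3 / 2 * v ^ (q - 3) := by
          have h1 : v + u * w ≤ 3 / 2 * v := by
            nlinarith [le_abs_self (u * w), abs_mul u w, abs_of_pos hu1, abs_nonneg w]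
          have h2 : (v + u * w) ^ (q - 3) ≤ (3 / 2 * v) ^ (q - 3) :=
            Real.rpow_le_rpow (hbase u hu1.le hu2.le).le h1 (by linarith)
          have h3 : ((3:ℝ) / 2 * v) ^ (q - 3) = (3 / 2 : ℝ) ^ (q - 3) * v ^ (q - 3) :=
            Real.mul_rpow (by norm_num) hv
          have h4 : ((3:ℝ) / 2) ^ (q - 3) ≤ 3 / 2 := by
            calc ((3:ℝ) / 2) ^ (q - 3) ≤ ((3:ℝ) / 2) ^ (1:ℝ) :=
                Real.rpow_le_rpow_of_exponent_le (by norm_num) (by linarith)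
              _ = 3 / 2 := Real.rpow_one _
          have h5 : (0:ℝ) ≤ v ^ (q - 3) := Real.rpow_nonneg hv _
          nlinarith
        have hrnn : (0:ℝ) ≤ (v + u * w) ^ (q - 3) :=
          Real.rpow_nonneg (hbase u hu1.le hu2.le).le _
        have hda : |(v + s * w) ^ (q - 2) - v ^ (q - 2)|
            ≤ (q - 2) * (3 / 2 * v ^ (q - 3)) * |w| := by
          have heq : |(v + s * w) ^ (q - 2) - v ^ (q - 2)|
              = s * ((q - 2) * (v + u * w) ^ (q - 3) * |w|) := by
            rw [hdiff, abs_mul, abs_mul, abs_of_pos hs.1,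
              abs_of_nonneg (mul_nonneg (by linarith : (0:ℝ) ≤ q - 2) hrnn), mul_assoc]
          rw [heq]
          have e1 : (q - 2) * (v + u * w) ^ (q - 3) ≤ (q - 2) * (3 / 2 * v ^ (q - 3)) :=
            mul_le_mul_of_nonneg_left hub (by linarith)
          have e2 : (q - 2) * (v + u * w) ^ (q - 3) * |w|
              ≤ (q - 2) * (3 / 2 * v ^ (q - 3)) * |w| :=
            mul_le_mul_of_nonneg_right e1 (abs_nonneg w)
          calc s * ((q - 2) * (v + u * w) ^ (q - 3) * |w|)
              ≤ 1 * ((q - 2) * (3 / 2 * v ^ (q - 3)) * |w|) :=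
              mul_le_mul hs.2.le e2
                (mul_nonneg (mul_nonneg (by linarith) hrnn) (abs_nonneg w)) (by norm_num)
            _ = (q - 2) * (3 / 2 * v ^ (q - 3)) * |w| := one_mul _
        have h1 := hkey.trans (mul_le_mul_of_nonneg_left hda hcoef)
        have hw3 : w ^ 2 * |w| = |w| ^ (3:ℝ) := by
          rw [h3w, ← sq_abs]; ring
        calc |(v + w) ^ q - v ^ q - q * v ^ (q - 1) * w
              - (q * (q - 1) / 2) * v ^ (q - 2) * w ^ 2|
            ≤ q * (q - 1) * w ^ 2 * ((q - 2) * (3 / 2 * v ^ (q - 3)) * |w|) := h1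
          _ = q * (q - 1) * (q - 2) * (3 / 2) * (v ^ (q - 3) * (w ^ 2 * |w|)) := by ring
          _ = q * (q - 1) * (q - 2) * (3 / 2) * (v ^ (q - 3) * |w| ^ (3:ℝ)) := by rw [hw3]
          _ ≤ 200 * (v ^ (q - 3) * |w| ^ (3:ℝ) + |w| ^ q) := by
              have hqq : q * (q - 1) * (q - 2) * (3 / 2) ≤ 200 := by
                nlinarith [mul_nonneg (mul_nonneg (by linarith : (0:ℝ) ≤ 4 - q)
                  (by linarith : (0:ℝ) ≤ q - 1)) (by linarith : (0:ℝ) ≤ q - 2),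
                  mul_nonneg (by linarith : (0:ℝ) ≤ 4 - q) (by linarith : (0:ℝ) ≤ q + 1)]
              have := mul_le_mul_of_nonneg_right hqq hnn3
              nlinarith [hPq]
      · push_neg at hvw2
        have hA : (v + w) ^ q ≤ 81 * |w| ^ q := by
          have h1 : v + w ≤ 3 * |w| := by nlinarith [le_abs_self w]
          have h2 : (v + w) ^ q ≤ (3 * |w|) ^ q := Real.rpow_le_rpow hvw h1 (by linarith)
          have h3 : ((3:ℝ) * |w|) ^ q = (3:ℝ) ^ q * |w| ^ q :=
            Real.mul_rpow (by norm_num) (abs_nonneg w)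
          have h4 : (3:ℝ) ^ q ≤ 81 := by
            calc (3:ℝ) ^ q ≤ (3:ℝ) ^ (4:ℝ) :=
                Real.rpow_le_rpow_of_exponent_le (by norm_num) hq2
              _ = 81 := by
                rw [show (4:ℝ) = ((4:ℕ):ℝ) by norm_num, Real.rpow_natCast]; norm_num
          have := mul_le_mul_of_nonneg_right h4 hPq
          linarith
        have hB : v ^ q ≤ 16 * |w| ^ q := by
          have h2 : v ^ q ≤ (2 * |w|) ^ q := Real.rpow_le_rpow hv hvw2.le (by linarith)
          have h3 : ((2:ℝ) * |w|) ^ q = (2:ℝ) ^ q * |w| ^ q :=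
            Real.mul_rpow (by norm_num) (abs_nonneg w)
          have h4 : (2:ℝ) ^ q ≤ 16 := by
            calc (2:ℝ) ^ q ≤ (2:ℝ) ^ (4:ℝ) :=
                Real.rpow_le_rpow_of_exponent_le (by norm_num) hq2
              _ = 16 := by
                rw [show (4:ℝ) = ((4:ℕ):ℝ) by norm_num, Real.rpow_natCast]; norm_num
          have := mul_le_mul_of_nonneg_right h4 hPq
          linarith
        have hmul : ∀ a b : ℝ, |w| ^ a * |w| ^ b = |w| ^ (a + b) :=
          fun a b => (Real.rpow_add hwpos a b).symm
        have hC : q * v ^ (q - 1) * |w| ≤ 32 * |w| ^ q := by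
          have h2 : v ^ (q - 1) ≤ (2 * |w|) ^ (q - 1) :=
            Real.rpow_le_rpow hv hvw2.le (by linarith)
          have h3 : ((2:ℝ) * |w|) ^ (q - 1) = (2:ℝ) ^ (q - 1) * |w| ^ (q - 1) :=
            Real.mul_rpow (by norm_num) (abs_nonneg w)
          have h4 : (2:ℝ) ^ (q - 1) ≤ 8 := by
            calc (2:ℝ) ^ (q - 1) ≤ (2:ℝ) ^ (3:ℝ) :=
                Real.rpow_le_rpow_of_exponent_le (by norm_num) (by linarith)
              _ = 8 := by
                rw [show (3:ℝ) = ((3:ℕ):ℝ) by norm_num, Real.rpow_natCast]; norm_num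
          have h5 : |w| ^ (q - 1) * |w| = |w| ^ q := by
            nth_rewrite 2 [← Real.rpow_one |w|]
            rw [← Real.rpow_add hwpos]; norm_num
          have h6 : (0:ℝ) ≤ |w| ^ (q - 1) := Real.rpow_nonneg (abs_nonneg w) _
          have h7 : (0:ℝ) ≤ v ^ (q - 1) := Real.rpow_nonneg hv _
          have k0 : v ^ (q - 1) ≤ 8 * |w| ^ (q - 1) := by
            have := mul_le_mul_of_nonneg_right h4 h6
            linarith
          have k1 : v ^ (q - 1) * |w| ≤ 8 * |w| ^ q := by
            calc v ^ (q - 1) * |w| ≤ 8 * |w| ^ (q - 1) * |w| :=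
                mul_le_mul_of_nonneg_right k0 (abs_nonneg w)
              _ = 8 * (|w| ^ (q - 1) * |w|) := by ring
              _ = 8 * |w| ^ q := by rw [h5]
          calc q * v ^ (q - 1) * |w| = q * (v ^ (q - 1) * |w|) := by ring
            _ ≤ 4 * (8 * |w| ^ q) :=
                mul_le_mul hq2 k1 (mul_nonneg h7 (abs_nonneg w)) (by norm_num)
            _ = 32 * |w| ^ q := by ring
        have hD : (q * (q - 1) / 2) * v ^ (q - 2) * w ^ 2 ≤ 24 * |w| ^ q := by
          have h2 : v ^ (q - 2) ≤ (2 * |w|) ^ (q - 2) :=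
            Real.rpow_le_rpow hv hvw2.le (by linarith)
          have h3 : ((2:ℝ) * |w|) ^ (q - 2) = (2:ℝ) ^ (q - 2) * |w| ^ (q - 2) :=
            Real.mul_rpow (by norm_num) (abs_nonneg w)
          have h4 : (2:ℝ) ^ (q - 2) ≤ 4 := by
            calc (2:ℝ) ^ (q - 2) ≤ (2:ℝ) ^ (2:ℝ) :=
                Real.rpow_le_rpow_of_exponent_le (by norm_num) (by linarith)
              _ = 4 := by
                rw [show (2:ℝ) = ((2:ℕ):ℝ) by norm_num, Real.rpow_natCast]; norm_num
          have h5 : |w| ^ (q - 2) * w ^ 2 = |w| ^ q := by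
            rw [← sq_abs, ← Real.rpow_natCast |w| 2, ← Real.rpow_add hwpos]
            norm_num
          have h6 : (0:ℝ) ≤ |w| ^ (q - 2) := Real.rpow_nonneg (abs_nonneg w) _
          have h7 : (0:ℝ) ≤ v ^ (q - 2) := Real.rpow_nonneg hv _
          have k0 : v ^ (q - 2) ≤ 4 * |w| ^ (q - 2) := by
            have := mul_le_mul_of_nonneg_right h4 h6
            linarith
          have k1 : v ^ (q - 2) * w ^ 2 ≤ 4 * |w| ^ q := by
            calc v ^ (q - 2) * w ^ 2 ≤ 4 * |w| ^ (q - 2) * w ^ 2 :=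
                mul_le_mul_of_nonneg_right k0 (sq_nonneg w)
              _ = 4 * (|w| ^ (q - 2) * w ^ 2) := by ring
              _ = 4 * |w| ^ q := by rw [h5]
          calc (q * (q - 1) / 2) * v ^ (q - 2) * w ^ 2
              = (q * (q - 1) / 2) * (v ^ (q - 2) * w ^ 2) := by ring
            _ ≤ 6 * (4 * |w| ^ q) :=
                mul_le_mul (by nlinarith : q * (q - 1) / 2 ≤ 6) k1
                  (mul_nonneg h7 (sq_nonneg w)) (by norm_num)
            _ = 24 * |w| ^ q := by ring
        have htri := sotp_abs_sub4 ((v + w) ^ q) (v ^ q) (q * v ^ (q - 1) * w)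
          ((q * (q - 1) / 2) * v ^ (q - 2) * w ^ 2)
        have ha1 : |(v + w) ^ q| = (v + w) ^ q := abs_of_nonneg (Real.rpow_nonneg hvw q)
        have ha2 : |v ^ q| = v ^ q := abs_of_nonneg (Real.rpow_nonneg hv q)
        have ha3 : |q * v ^ (q - 1) * w| = q * v ^ (q - 1) * |w| := by
          rw [abs_mul, abs_mul, abs_of_nonneg (by linarith : (0:ℝ) ≤ q),
            abs_of_nonneg (Real.rpow_nonneg hv _)]
        have ha4 : |(q * (q - 1) / 2) * v ^ (q - 2) * w ^ 2|
            = (q * (q - 1) / 2) * v ^ (q - 2) * w ^ 2 := by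
          rw [abs_mul, abs_mul, abs_of_nonneg (by nlinarith : (0:ℝ) ≤ q * (q - 1) / 2),
            abs_of_nonneg (Real.rpow_nonneg hv _), abs_of_nonneg (sq_nonneg w)]
        rw [ha1, ha2, ha3, ha4] at htri
        linarith
end

section
/- Let p be a real number with 0 < p ≤ 2. There exists a constant C = C(p) > 0 such that for all real numbers u ≥ 0 and v ≥ 0, one has |u^{1+p} − v^{1+p} − |u − v|^p (u − v)| ≤ C ( v^p |u − v| + |u − v|^p v ). -/
lemma rpow_key {x h q : ℝ} (hx : 0 ≤ x) (hh : 0 ≤ h) (hq : 1 ≤ q) :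
    (x + h) ^ q - x ^ q ≤ q * (x + h) ^ (q - 1) * h := by
  have hq0 : q ≠ 0 := by linarith
  rcases eq_or_lt_of_le (by linarith : (0:ℝ) ≤ x + h) with hs | hs
  · have hx0 : x = 0 := by linarith
    have hh0 : h = 0 := by linarith
    simp [← hs, hx0, hh0, Real.zero_rpow hq0]
  · set s := x + h with hsdef
    have hsne : s ≠ 0 := hs.ne'
    have htnn : (0:ℝ) ≤ x / s := div_nonneg hx hs.le
    have hb := one_add_mul_self_le_rpow_one_add (by linarith : (-1:ℝ) ≤ x / s - 1) hq
    rw [show (1 : ℝ) + (x / s - 1) = x / s by ring] at hb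
    have hsq : (0:ℝ) < s ^ q := Real.rpow_pos_of_pos hs q
    have hmul := mul_le_mul_of_nonneg_right hb hsq.le
    have h1 : (x / s) ^ q * s ^ q = x ^ q := by
      rw [← Real.mul_rpow htnn hs.le, div_mul_cancel₀ _ hsne]
    have h2 : s ^ q = s ^ (q - 1) * s := by
      rw [← Real.rpow_add_one hsne, sub_add_cancel]
    have h3 : (x / s) * s ^ q = x * s ^ (q - 1) := by
      rw [h2]; field_simp
    rw [h1] at hmul
    have hexp : (1 + q * (x / s - 1)) * s ^ q
        = s ^ (q-1) * s + q * (x * s ^ (q-1)) - q * (s ^ (q-1) * s) := by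
      calc (1 + q * (x / s - 1)) * s ^ q
          = s ^ q + q * (x / s * s ^ q) - q * s ^ q := by ring
        _ = s ^ (q-1) * s + q * (x * s ^ (q-1)) - q * (s ^ (q-1) * s) := by
            rw [h3, h2]
    rw [hexp] at hmul
    have hid : q * (s ^ (q-1) * h) = q * (s ^ (q-1) * s) - q * (x * s ^ (q-1)) := by
      rw [hsdef]; ring
    have hgoal : s ^ q - x ^ q ≤ q * (s ^ (q-1) * h) := by linarith
    linarith [hgoal]

lemma rpow_superadd {x y q : ℝ} (hx : 0 ≤ x) (hy : 0 ≤ y) (hq : 1 ≤ q) :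
    x ^ q + y ^ q ≤ (x + y) ^ q := by
  have hq0 : q ≠ 0 := by linarith
  rcases eq_or_lt_of_le (by linarith : (0:ℝ) ≤ x + y) with hs | hs
  · have hx0 : x = 0 := by linarith
    have hy0 : y = 0 := by linarith
    simp [← hs, hx0, hy0, Real.zero_rpow hq0]
  · have h2 : (x + y) ^ q = (x + y) ^ (q - 1) * (x + y) := by
      rw [← Real.rpow_add_one hs.ne', sub_add_cancel]
    have hxle : x ^ q ≤ (x + y) ^ (q - 1) * x := by
      calc x ^ q = x ^ (q-1) * x := by
            rcases eq_or_lt_of_le hx with h | h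
            · simp [← h, Real.zero_rpow hq0]
            · rw [← Real.rpow_add_one h.ne', sub_add_cancel]
        _ ≤ (x + y) ^ (q-1) * x :=
            mul_le_mul_of_nonneg_right
              (Real.rpow_le_rpow hx (by linarith) (by linarith)) hx
    have hyle : y ^ q ≤ (x + y) ^ (q - 1) * y := by
      calc y ^ q = y ^ (q-1) * y := by
            rcases eq_or_lt_of_le hy with h | h
            · simp [← h, Real.zero_rpow hq0]
            · rw [← Real.rpow_add_one h.ne', sub_add_cancel]
        _ ≤ (x + y) ^ (q-1) * y :=
            mul_le_mul_of_nonneg_right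
              (Real.rpow_le_rpow hy (by linarith) (by linarith)) hy
    nlinarith

/-- Brezis–Lieb type pointwise estimate: for `0 < p ≤ 2` there is `C > 0` with
`|u^{1+p} − v^{1+p} − |u−v|^p (u−v)| ≤ C(v^p |u−v| + |u−v|^p v)` for all `u, v ≥ 0`. -/
theorem signed_power_decomposition (p : ℝ) (hp1 : 0 < p) (hp2 : p ≤ 2) :
    ∃ C : ℝ, 0 < C ∧ ∀ u v : ℝ, 0 ≤ u → 0 ≤ v →
      |u ^ (1 + p) - v ^ (1 + p) - |u - v| ^ p * (u - v)|
        ≤ C * (v ^ p * |u - v| + |u - v| ^ p * v) := by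
  have h2p : (0:ℝ) < 2 ^ p := Real.rpow_pos_of_pos (by norm_num) p
  refine ⟨(1 + p) * 2 ^ p, by positivity, ?_⟩
  intro u v hu hv
  have hq : (1:ℝ) ≤ 1 + p := by linarith
  have hqs : (1 + p) - 1 = p := by ring
  rcases le_or_gt v u with huv | huv
  · -- u ≥ v : write u = v + w
    set w := u - v with hw
    have hw0 : 0 ≤ w := by simp [hw]; linarith
    have habs : |u - v| = w := abs_of_nonneg (by linarith)
    have hE0 : 0 ≤ u ^ (1 + p) - v ^ (1 + p) - w ^ p * w := by
      have := rpow_superadd hv hw0 hq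
      have hww : w ^ (1 + p) = w ^ p * w := by
        rcases eq_or_lt_of_le hw0 with h | h
        · simp [← h, Real.zero_rpow hp1.ne', Real.zero_rpow (by linarith : (1:ℝ)+p ≠ 0)]
        · rw [add_comm, ← Real.rpow_add_one h.ne']
      have huvw : v + w = u := by simp [hw]
      rw [huvw, hww] at this
      linarith
    rw [habs, abs_of_nonneg hE0]
    -- upper bound
    rcases le_or_gt v w with hvw | hvw
    · -- take h = v in key lemma: (w+v)^q - w^q ≤ (1+p)(w+v)^p v
      have hk := rpow_key hw0 hv hq
      rw [hqs] at hk
      have huvw : w + v = u := by simp [hw]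
      rw [huvw] at hk
      have hup : u ^ p ≤ (2*w) ^ p := Real.rpow_le_rpow hu (by linarith) hp1.le
      have h2w : (2*w) ^ p = 2 ^ p * w ^ p :=
        Real.mul_rpow (by norm_num) hw0
      have hwq : w ^ (1 + p) = w ^ p * w := by
        rcases eq_or_lt_of_le hw0 with h | h
        · simp [← h, Real.zero_rpow hp1.ne', Real.zero_rpow (by linarith : (1:ℝ)+p ≠ 0)]
        · rw [add_comm, ← Real.rpow_add_one h.ne']
      have hvq : 0 ≤ v ^ (1 + p) := Real.rpow_nonneg hv _
      have hwp : 0 ≤ w ^ p := Real.rpow_nonneg hw0 _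
      have hvp : 0 ≤ v ^ p := Real.rpow_nonneg hv _
      have hup2 : (1+p) * (u ^ p * v) ≤ (1+p) * (2 ^ p * (w ^ p * v)) := by
        refine mul_le_mul_of_nonneg_left ?_ (by linarith)
        calc u ^ p * v ≤ (2*w) ^ p * v := mul_le_mul_of_nonneg_right hup hv
          _ = 2 ^ p * (w ^ p * v) := by rw [h2w, mul_assoc]
      nlinarith [mul_nonneg hvp hw0, mul_nonneg (mul_nonneg (by linarith : (0:ℝ) ≤ 1+p) h2p.le) (mul_nonneg hvp hw0)]
    · -- take h = w: (v+w)^q - v^q ≤ (1+p)(v+w)^p w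
      have hk := rpow_key hv hw0 hq
      rw [hqs] at hk
      have huvw : v + w = u := by simp [hw]
      rw [huvw] at hk
      have hup : u ^ p ≤ (2*v) ^ p := Real.rpow_le_rpow hu (by linarith) hp1.le
      have h2w : (2*v) ^ p = 2 ^ p * v ^ p :=
        Real.mul_rpow (by norm_num) hv
      have hwq : w ^ (1 + p) = w ^ p * w := by
        rcases eq_or_lt_of_le hw0 with h | h
        · simp [← h, Real.zero_rpow hp1.ne', Real.zero_rpow (by linarith : (1:ℝ)+p ≠ 0)]
        · rw [add_comm, ← Real.rpow_add_one h.ne']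
      have hwq0 : 0 ≤ w ^ (1 + p) := Real.rpow_nonneg hw0 _
      have hwp : 0 ≤ w ^ p := Real.rpow_nonneg hw0 _
      have hvp : 0 ≤ v ^ p := Real.rpow_nonneg hv _
      have hup2 : (1+p) * (u ^ p * w) ≤ (1+p) * (2 ^ p * (v ^ p * w)) := by
        refine mul_le_mul_of_nonneg_left ?_ (by linarith)
        calc u ^ p * w ≤ (2*v) ^ p * w := mul_le_mul_of_nonneg_right hup hw0
          _ = 2 ^ p * (v ^ p * w) := by rw [h2w, mul_assoc]
      nlinarith [mul_nonneg hwp hv, mul_nonneg (mul_nonneg (by linarith : (0:ℝ) ≤ 1+p) h2p.le) (mul_nonneg hwp hv)]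
  · -- u < v : write v = u + w, w = v - u > 0
    set w := v - u with hw
    have hw0 : 0 ≤ w := by simp [hw]; linarith
    have habs : |u - v| = w := by rw [abs_of_nonpos (by linarith)]; simp [hw]
    have huvw : u + w = v := by simp [hw]
    -- expression = -(v^q - u^q - w^q) where E := v^q - u^q - w^q ≥ 0
    have hwq : w ^ (1 + p) = w ^ p * w := by
      rcases eq_or_lt_of_le hw0 with h | h
      · simp [← h, Real.zero_rpow hp1.ne', Real.zero_rpow (by linarith : (1:ℝ)+p ≠ 0)]
      · rw [add_comm, ← Real.rpow_add_one h.ne']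
    have hE0 : 0 ≤ v ^ (1 + p) - u ^ (1 + p) - w ^ (1 + p) := by
      have := rpow_superadd hu hw0 hq
      rw [huvw] at this; linarith
    have hrw : u ^ (1 + p) - v ^ (1 + p) - w ^ p * (u - v)
        = -(v ^ (1 + p) - u ^ (1 + p) - w ^ (1 + p)) := by
      rw [hwq]; have : u - v = -w := by simp [hw]
      rw [this]; ring
    rw [habs, hrw, abs_neg, abs_of_nonneg hE0]
    -- E ≤ (1+p) v^p w - w^{1+p} ≤ (1+p) v^p w
    have hk := rpow_key hu hw0 hq
    rw [hqs, huvw] at hk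
    have hwq0 : 0 ≤ w ^ (1 + p) := Real.rpow_nonneg hw0 _
    have hvp : 0 ≤ v ^ p := Real.rpow_nonneg hv _
    have hwp : 0 ≤ w ^ p := Real.rpow_nonneg hw0 _
    have h2p1 : (1:ℝ) ≤ 2 ^ p := by
      calc (1:ℝ) = 2 ^ (0:ℝ) := by simp
        _ ≤ 2 ^ p := Real.rpow_le_rpow_of_exponent_le (by norm_num) hp1.le
    have key : (1+p) * (v ^ p * w) ≤ (1+p) * (2 ^ p * (v ^ p * w)) := by
      refine mul_le_mul_of_nonneg_left ?_ (by linarith)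
      nlinarith [mul_nonneg hvp hw0]
    nlinarith [mul_nonneg hvp hw0, mul_nonneg hwp hv,
      mul_nonneg (mul_nonneg (by linarith : (0:ℝ) ≤ 1+p) h2p.le) (mul_nonneg hwp hv)]
end

section
/- Let 0 < γ < 1 and C > 0, let a ∈ ℝ, and let f : [a, ∞) → ℝ be differentiable with f(t) > 0 for all t ≥ a and f′(t) ≤ −C f(t)^{2/(1+γ)} for all t ≥ a. Then for all t > a, f(t) ≤ ( C (1−γ)/(1+γ) · (t − a) )^{−(1+γ)/(1−γ)}. -/
/-- ODE comparison lemma for the Lojasiewicz differential inequality: if `0 < γ < 1`,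
`C > 0`, `f > 0` on `[a, ∞)`, and `f′(t) ≤ −C f(t)^{2/(1+γ)}` there, then
`f(t) ≤ (C (1−γ)/(1+γ) (t−a))^{−(1+γ)/(1−γ)}` for `t > a`. -/
theorem lojasiewicz_decay (γ C a : ℝ) (hγ0 : 0 < γ) (hγ1 : γ < 1) (hC : 0 < C)
    (f f' : ℝ → ℝ)
    (hpos : ∀ t, a ≤ t → 0 < f t)
    (hderiv : ∀ t, a ≤ t → HasDerivAt f (f' t) t)
    (hineq : ∀ t, a ≤ t → f' t ≤ -C * f t ^ (2 / (1 + γ))) :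
    ∀ t, a < t →
      f t ≤ (C * (1 - γ) / (1 + γ) * (t - a)) ^ (-((1 + γ) / (1 - γ))) := by
  have h1γ : (0:ℝ) < 1 + γ := by linarith
  have h1γ' : (0:ℝ) < 1 - γ := by linarith
  set β : ℝ := (1 - γ) / (1 + γ) with hβdef
  have hβ : 0 < β := div_pos h1γ' h1γ
  set g : ℝ → ℝ := fun t => f t ^ (-β) with hgdef
  -- derivative of g
  have hgderiv : ∀ x, a ≤ x → HasDerivAt g (f' x * (-β) * f x ^ (-β - 1)) x := by
    intro x hx
    exact (hderiv x hx).rpow_const (Or.inl (hpos x hx).ne')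
  have key : ∀ x, a ≤ x → C * β ≤ f' x * (-β) * f x ^ (-β - 1) := by
    intro x hx
    have hfx := hpos x hx
    have hpow : (0:ℝ) < f x ^ (-β - 1) := Real.rpow_pos_of_pos hfx _
    have h := hineq x hx
    have hmul : f' x * (-β) ≥ (-C * f x ^ (2 / (1 + γ))) * (-β) := by nlinarith
    have h2 : f x ^ (2 / (1 + γ)) * f x ^ (-β - 1) = 1 := by
      rw [← Real.rpow_add hfx]
      have : 2 / (1 + γ) + (-β - 1) = 0 := by
        rw [hβdef]; field_simp; ring
      rw [this, Real.rpow_zero]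
    have h3 : -C * f x ^ (2 / (1 + γ)) * -β * f x ^ (-β - 1) = C * β := by
      rw [show -C * f x ^ (2 / (1 + γ)) * -β * f x ^ (-β - 1)
          = C * β * (f x ^ (2 / (1 + γ)) * f x ^ (-β - 1)) from by ring, h2, mul_one]
    linarith [mul_le_mul_of_nonneg_right hmul.le hpow.le]
  -- g grows at least linearly
  have hgrow : ∀ t, a ≤ t → C * β * (t - a) ≤ g t - g a := by
    have hconv : Convex ℝ (Set.Ici a) := convex_Ici a
    have hcont : ContinuousOn g (Set.Ici a) := fun x hx =>
      ((hgderiv x hx).continuousAt).continuousWithinAt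
    have hint : interior (Set.Ici a) = Set.Ioi a := interior_Ici
    have hdiff : DifferentiableOn ℝ g (interior (Set.Ici a)) := by
      rw [hint]; intro x hx
      exact ((hgderiv x (le_of_lt hx)).differentiableAt).differentiableWithinAt
    have hge : ∀ x ∈ interior (Set.Ici a), C * β ≤ deriv g x := by
      rw [hint]; intro x hx
      rw [(hgderiv x (le_of_lt hx)).deriv]
      exact key x (le_of_lt hx)
    intro t ht
    exact hconv.mul_sub_le_image_sub_of_le_deriv hcont hdiff hge a Set.self_mem_Ici t ht ht
  intro t ht
  have hfa : 0 < g a := Real.rpow_pos_of_pos (hpos a le_rfl) _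
  have hft : 0 < f t := hpos t ht.le
  have hbase : 0 < C * β * (t - a) := by
    apply mul_pos (mul_pos hC hβ); linarith
  have hgt : C * β * (t - a) ≤ g t := by
    have := hgrow t ht.le; linarith
  -- take rpow with exponent -1/β
  have hz : -(1/β) ≤ 0 := by
    have : (0:ℝ) < 1/β := by positivity
    linarith
  have hmono := Real.rpow_le_rpow_of_nonpos hbase hgt hz
  have hgt_pow : g t ^ (-(1/β)) = f t := by
    show (f t ^ (-β)) ^ (-(1/β)) = f t
    rw [← Real.rpow_mul hft.le]
    have : -β * -(1/β) = 1 := by field_simp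
    rw [this, Real.rpow_one]
  have hbase_eq : C * (1 - γ) / (1 + γ) * (t - a) = C * β * (t - a) := by
    rw [hβdef]; ring
  have hexp_eq : -((1 + γ) / (1 - γ)) = -(1/β) := by
    rw [hβdef, one_div_div]
  rw [hbase_eq, hexp_eq]
  calc f t = g t ^ (-(1/β)) := hgt_pow.symm
    _ ≤ _ := hmono
end

section
/- Let n ≥ 1 be an integer and let ε₁ > 0, ε₂ > 0, d ≥ 0 be real numbers. Then ε₁ⁿ ε₂ⁿ (ε₂⁴ + d⁴)^{−(n+1)/2} ∫_0^{(ε₂+d)/2} r^{2n+1} (ε₁⁴ + r⁴)^{−n/2} dr + ε₁ⁿ ε₂^{n+2} (ε₂⁴ + d⁴)^{−n/2} ∫_0^∞ r^{2n+1} (ε₂⁴ + r⁴)^{−(n+2)/2} dr ≤ 2 ( ε₁² ε₂² / (ε₂⁴ + d⁴) )^{n/2}. -/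
open MeasureTheory Set intervalIntegral

/-- Pointwise bound for the first integrand. -/
lemma bubble_pt1 (n : ℕ) (ε₁ : ℝ) (hε₁ : 0 < ε₁) {r : ℝ} (hr : 0 < r) :
    r ^ (2 * n + 1) * (ε₁ ^ 4 + r ^ 4) ^ (-((n : ℝ) / 2)) ≤ r := by
  have h1 : (ε₁ ^ 4 + r ^ 4) ^ (-((n : ℝ) / 2)) ≤ (r ^ 4) ^ (-((n : ℝ) / 2)) := by
    apply Real.rpow_le_rpow_of_nonpos (pow_pos hr 4)
    · nlinarith [pow_pos hε₁ 4]
    · rw [neg_nonpos]; positivity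
  have h2 : (r ^ 4 : ℝ) ^ (-((n : ℝ) / 2)) = r ^ (-(2 * (n : ℝ))) := by
    rw [← Real.rpow_natCast r 4, ← Real.rpow_mul hr.le]
    norm_num
    ring_nf
  calc r ^ (2 * n + 1) * (ε₁ ^ 4 + r ^ 4) ^ (-((n : ℝ) / 2))
      ≤ r ^ (2 * n + 1) * (r ^ 4) ^ (-((n : ℝ) / 2)) := by
        exact mul_le_mul_of_nonneg_left h1 (by positivity)
    _ = r := by
        rw [h2, ← Real.rpow_natCast r (2 * n + 1), ← Real.rpow_add hr]
        rw [show ((2 * n + 1 : ℕ) : ℝ) + -(2 * (n : ℝ)) = 1 by push_cast; ring]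
        exact Real.rpow_one r

/-- The first integral is bounded by `L²/2`. -/
lemma bubble_int1 (n : ℕ) (ε₁ : ℝ) (hε₁ : 0 < ε₁) {L : ℝ} (hL : 0 ≤ L) :
    (∫ r in Ioc (0 : ℝ) L, r ^ (2 * n + 1) * (ε₁ ^ 4 + r ^ 4) ^ (-((n : ℝ) / 2)))
      ≤ L ^ 2 / 2 := by
  have hcont : Continuous fun r : ℝ =>
      r ^ (2 * n + 1) * (ε₁ ^ 4 + r ^ 4) ^ (-((n : ℝ) / 2)) := by
    apply Continuous.mul (continuous_pow _)
    apply Continuous.rpow_const (continuous_const.add (continuous_pow 4))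
    intro x; left; exact (by positivity : (0:ℝ) < ε₁ ^ 4 + x ^ 4).ne'
  have h1 : (∫ r in Ioc (0 : ℝ) L, r ^ (2 * n + 1) * (ε₁ ^ 4 + r ^ 4) ^ (-((n : ℝ) / 2)))
      ≤ ∫ r in Ioc (0 : ℝ) L, r := by
    apply setIntegral_mono_on (hcont.integrableOn_Ioc) (continuous_id.integrableOn_Ioc)
      measurableSet_Ioc
    intro r hr
    exact bubble_pt1 n ε₁ hε₁ hr.1
  have h2 : (∫ r in Ioc (0 : ℝ) L, r) = L ^ 2 / 2 := by
    rw [← integral_of_le hL, integral_id]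
    ring
  linarith

/-- The second integral is bounded by `ε₂⁻²`. -/
lemma bubble_int2 (n : ℕ) (ε₂ : ℝ) (hε₂ : 0 < ε₂) :
    (∫ r in Ioi (0 : ℝ), r ^ (2 * n + 1) * (ε₂ ^ 4 + r ^ 4) ^ (-(((n : ℝ) + 2) / 2)))
      ≤ (ε₂ ^ 2)⁻¹ := by
  set f : ℝ → ℝ := fun r => r ^ (2 * n + 1) * (ε₂ ^ 4 + r ^ 4) ^ (-(((n : ℝ) + 2) / 2))
    with hf_def
  have hcont : Continuous f := by
    apply Continuous.mul (continuous_pow _)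
    apply Continuous.rpow_const (continuous_const.add (continuous_pow 4))
    intro x; left; exact (by positivity : (0:ℝ) < ε₂ ^ 4 + x ^ 4).ne'
  -- pointwise bound on Ioi ε₂
  have hpt2 : ∀ r : ℝ, ε₂ < r → f r ≤ r ^ (-3 : ℝ) := by
    intro r hr
    have hr0 : 0 < r := hε₂.trans hr
    have h1 : (ε₂ ^ 4 + r ^ 4) ^ (-(((n : ℝ) + 2) / 2)) ≤ (r ^ 4) ^ (-(((n : ℝ) + 2) / 2)) := by
      apply Real.rpow_le_rpow_of_nonpos (pow_pos hr0 4)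
      · nlinarith [pow_pos hε₂ 4]
      · rw [neg_nonpos]; positivity
    have h2 : (r ^ 4 : ℝ) ^ (-(((n : ℝ) + 2) / 2)) = r ^ (-(2 * (n : ℝ) + 4)) := by
      rw [← Real.rpow_natCast r 4, ← Real.rpow_mul hr0.le]
      norm_num
      ring_nf
    calc f r ≤ r ^ (2 * n + 1) * (r ^ 4) ^ (-(((n : ℝ) + 2) / 2)) :=
          mul_le_mul_of_nonneg_left h1 (by positivity)
      _ = r ^ (-3 : ℝ) := by
          rw [h2, ← Real.rpow_natCast r (2 * n + 1), ← Real.rpow_add hr0]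
          congr 1
          push_cast; ring
  have hint_tail : IntegrableOn (fun r : ℝ => r ^ (-3 : ℝ)) (Ioi ε₂) :=
    integrableOn_Ioi_rpow_of_lt (by norm_num) hε₂
  have hf_tail : IntegrableOn f (Ioi ε₂) := by
    apply Integrable.mono' hint_tail (hcont.aestronglyMeasurable.restrict)
    filter_upwards [ae_restrict_mem measurableSet_Ioi] with r hr
    have hr0 : 0 < r := hε₂.trans hr
    rw [Real.norm_eq_abs, abs_of_nonneg (by positivity)]
    exact hpt2 r hr
  have hf_head : IntegrableOn f (Ioc 0 ε₂) := hcont.integrableOn_Ioc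
  have hsplit : (∫ r in Ioi (0 : ℝ), f r)
      = (∫ r in Ioc (0 : ℝ) ε₂, f r) + ∫ r in Ioi ε₂, f r := by
    rw [← setIntegral_union (Ioc_disjoint_Ioi le_rfl) measurableSet_Ioi hf_head hf_tail,
      Ioc_union_Ioi_eq_Ioi hε₂.le]
  -- head bound
  have hC : (ε₂ ^ 4 : ℝ) ^ (-(((n : ℝ) + 2) / 2)) = ε₂ ^ (-(2 * (n : ℝ) + 4)) := by
    rw [← Real.rpow_natCast ε₂ 4, ← Real.rpow_mul hε₂.le]
    norm_num
    ring_nf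
  have hhead : (∫ r in Ioc (0 : ℝ) ε₂, f r) ≤ (ε₂ ^ 2)⁻¹ / 2 := by
    have h1 : (∫ r in Ioc (0 : ℝ) ε₂, f r)
        ≤ ∫ r in Ioc (0 : ℝ) ε₂, r ^ (2 * n + 1) * (ε₂ ^ 4 : ℝ) ^ (-(((n : ℝ) + 2) / 2)) := by
      apply setIntegral_mono_on hf_head
        (((continuous_pow _).mul continuous_const).integrableOn_Ioc) measurableSet_Ioc
      intro r hr
      refine mul_le_mul_of_nonneg_left ?_ (pow_nonneg hr.1.le _)
      refine Real.rpow_le_rpow_of_nonpos (by positivity) (by nlinarith [pow_pos hr.1 4]) ?_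
      rw [neg_nonpos]; positivity
    have h2 : (∫ r in Ioc (0 : ℝ) ε₂, r ^ (2 * n + 1) * (ε₂ ^ 4 : ℝ) ^ (-(((n : ℝ) + 2) / 2)))
        = ε₂ ^ (2 * n + 2) / (2 * n + 2) * (ε₂ ^ 4 : ℝ) ^ (-(((n : ℝ) + 2) / 2)) := by
      rw [MeasureTheory.integral_mul_const, ← integral_of_le hε₂.le, integral_pow]
      push_cast
      ring_nf
    have h3 : ε₂ ^ (2 * n + 2) / (2 * n + 2) * (ε₂ ^ 4 : ℝ) ^ (-(((n : ℝ) + 2) / 2))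
        ≤ (ε₂ ^ 2)⁻¹ / 2 := by
      rw [hC]
      have he : ε₂ ^ (2 * n + 2) * ε₂ ^ (-(2 * (n : ℝ) + 4)) = (ε₂ ^ 2)⁻¹ := by
        rw [← Real.rpow_natCast ε₂ (2 * n + 2), ← Real.rpow_add hε₂,
          show ((2 * n + 2 : ℕ) : ℝ) + -(2 * (n : ℝ) + 4) = -2 by push_cast; ring,
          Real.rpow_neg hε₂.le, Real.rpow_two]
      have hpos : (0 : ℝ) < ε₂ ^ (2 * n + 2) * ε₂ ^ (-(2 * (n : ℝ) + 4)) := by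
        apply mul_pos (pow_pos hε₂ _) (Real.rpow_pos_of_pos hε₂ _)
      rw [div_mul_eq_mul_div, he] at *
      rw [div_le_div_iff₀ (by positivity) (by norm_num)]
      rw [he] at hpos
      nlinarith [hpos]
    linarith
  -- tail bound
  have htail : (∫ r in Ioi ε₂, f r) ≤ (ε₂ ^ 2)⁻¹ / 2 := by
    have h1 : (∫ r in Ioi ε₂, f r) ≤ ∫ r in Ioi ε₂, r ^ (-3 : ℝ) := by
      apply setIntegral_mono_on hf_tail hint_tail measurableSet_Ioi
      intro r hr
      exact hpt2 r hr
    have h2 : (∫ r in Ioi ε₂, r ^ (-3 : ℝ)) = (ε₂ ^ 2)⁻¹ / 2 := by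
      rw [integral_Ioi_rpow_of_lt (by norm_num) hε₂,
        show (-3 : ℝ) + 1 = -2 by norm_num, Real.rpow_neg hε₂.le, Real.rpow_two]
      ring
    linarith
  linarith [hsplit, hhead, htail]

/-- Radial form of the bubble–bubble interaction estimate between bubbles with
scales `ε₁, ε₂` and centers at distance `d`. -/
theorem bubble_interaction_estimate (n : ℕ) (hn : 1 ≤ n)
    (ε₁ ε₂ d : ℝ) (hε₁ : 0 < ε₁) (hε₂ : 0 < ε₂) (hd : 0 ≤ d) :
    ε₁ ^ n * ε₂ ^ n * (ε₂ ^ 4 + d ^ 4) ^ (-(((n : ℝ) + 1) / 2)) *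
        (∫ r in Ioc (0 : ℝ) ((ε₂ + d) / 2),
          r ^ (2 * n + 1) * (ε₁ ^ 4 + r ^ 4) ^ (-((n : ℝ) / 2)))
      + ε₁ ^ n * ε₂ ^ (n + 2) * (ε₂ ^ 4 + d ^ 4) ^ (-((n : ℝ) / 2)) *
          (∫ r in Ioi (0 : ℝ),
            r ^ (2 * n + 1) * (ε₂ ^ 4 + r ^ 4) ^ (-(((n : ℝ) + 2) / 2)))
      ≤ 2 * (ε₁ ^ 2 * ε₂ ^ 2 / (ε₂ ^ 4 + d ^ 4)) ^ ((n : ℝ) / 2) := by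
  set A : ℝ := ε₂ ^ 4 + d ^ 4 with hA_def
  have hA : 0 < A := by positivity
  -- relating the RHS to ε₁^n ε₂^n A^(-n/2)
  have hsq : ∀ x : ℝ, 0 ≤ x → (x ^ 2) ^ ((n : ℝ) / 2) = x ^ n := by
    intro x hx
    rw [← Real.rpow_natCast x 2, ← Real.rpow_mul hx,
      show ((2 : ℕ) : ℝ) * ((n : ℝ) / 2) = (n : ℝ) by push_cast; ring, Real.rpow_natCast]
  have hRHS : (ε₁ ^ 2 * ε₂ ^ 2 / A) ^ ((n : ℝ) / 2)
      = ε₁ ^ n * ε₂ ^ n * A ^ (-((n : ℝ) / 2)) := by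
    rw [Real.div_rpow (by positivity) hA.le, Real.mul_rpow (by positivity) (by positivity),
      hsq ε₁ hε₁.le, hsq ε₂ hε₂.le, Real.rpow_neg hA.le, div_eq_mul_inv]
  -- first term bound
  have hL : 0 ≤ (ε₂ + d) / 2 := by positivity
  have hJ : (∫ r in Ioc (0 : ℝ) ((ε₂ + d) / 2),
      r ^ (2 * n + 1) * (ε₁ ^ 4 + r ^ 4) ^ (-((n : ℝ) / 2))) ≤ A ^ ((1 : ℝ) / 2) := by
    refine (bubble_int1 n ε₁ hε₁ hL).trans ?_
    rw [← Real.sqrt_eq_rpow]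
    apply Real.le_sqrt_of_sq_le
    rw [hA_def]
    nlinarith [sq_nonneg (ε₂ - d), sq_nonneg (ε₂ ^ 2 - d ^ 2), sq_nonneg (ε₂ + d),
      sq_nonneg ((ε₂ + d) ^ 2)]
  have hT1 : ε₁ ^ n * ε₂ ^ n * A ^ (-(((n : ℝ) + 1) / 2)) *
      (∫ r in Ioc (0 : ℝ) ((ε₂ + d) / 2),
        r ^ (2 * n + 1) * (ε₁ ^ 4 + r ^ 4) ^ (-((n : ℝ) / 2)))
      ≤ ε₁ ^ n * ε₂ ^ n * A ^ (-((n : ℝ) / 2)) := by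
    calc ε₁ ^ n * ε₂ ^ n * A ^ (-(((n : ℝ) + 1) / 2)) *
        (∫ r in Ioc (0 : ℝ) ((ε₂ + d) / 2),
          r ^ (2 * n + 1) * (ε₁ ^ 4 + r ^ 4) ^ (-((n : ℝ) / 2)))
        ≤ ε₁ ^ n * ε₂ ^ n * A ^ (-(((n : ℝ) + 1) / 2)) * A ^ ((1 : ℝ) / 2) :=
          mul_le_mul_of_nonneg_left hJ (by positivity)
      _ = ε₁ ^ n * ε₂ ^ n * A ^ (-((n : ℝ) / 2)) := by
          rw [mul_assoc, ← Real.rpow_add hA]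
          congr 2
          ring
  -- second term bound
  have hT2 : ε₁ ^ n * ε₂ ^ (n + 2) * A ^ (-((n : ℝ) / 2)) *
      (∫ r in Ioi (0 : ℝ), r ^ (2 * n + 1) * (ε₂ ^ 4 + r ^ 4) ^ (-(((n : ℝ) + 2) / 2)))
      ≤ ε₁ ^ n * ε₂ ^ n * A ^ (-((n : ℝ) / 2)) := by
    calc ε₁ ^ n * ε₂ ^ (n + 2) * A ^ (-((n : ℝ) / 2)) *
        (∫ r in Ioi (0 : ℝ), r ^ (2 * n + 1) * (ε₂ ^ 4 + r ^ 4) ^ (-(((n : ℝ) + 2) / 2)))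
        ≤ ε₁ ^ n * ε₂ ^ (n + 2) * A ^ (-((n : ℝ) / 2)) * (ε₂ ^ 2)⁻¹ :=
          mul_le_mul_of_nonneg_left (bubble_int2 n ε₂ hε₂) (by positivity)
      _ = ε₁ ^ n * ε₂ ^ n * A ^ (-((n : ℝ) / 2)) := by
          field_simp
          ring
  rw [hRHS]
  linarith [hT1, hT2]
end
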